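/- arXiv:2403.05803 — 2 statements merged into one kernel-verified Lean document; each statement's English description precedes it below -/
import Mathlib

section
/- Let c, τ ∈ ℝ. Let μ₀, μ₁ : ℝ → ℝ be continuous functions, and let p : ℝ → ℝ be continuous at every x ≠ c, have a finite left limit at c, and be right-continuous at c. Let C : ℝ → ℝ be continuous at every x ≠ c, have a finite left limit at c, and be right-continuous at c. Assume τ = μ₁(c) − μ₀(c). Then there exist a constant β ∈ ℝ and a continuous function f : ℝ → ℝ such that for all x ∈ ℝ: μ₀(x)(1 − p(x)) + μ₁(x)p(x) + C(x) = τ·p(x) + β·𝟙(x ≥ c) + f(x). -/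
open Filter Set

theorem stmt0 (c τ : ℝ) (μ₀ μ₁ p C : ℝ → ℝ)
    (hμ₀ : Continuous μ₀) (hμ₁ : Continuous μ₁)
    (hp_cont : ∀ x : ℝ, x ≠ c → ContinuousAt p x)
    (hp_left : ∃ L : ℝ, Tendsto p (nhdsWithin c (Iio c)) (nhds L))
    (hp_right : Tendsto p (nhdsWithin c (Ici c)) (nhds (p c)))
    (hC_cont : ∀ x : ℝ, x ≠ c → ContinuousAt C x)
    (hC_left : ∃ L : ℝ, Tendsto C (nhdsWithin c (Iio c)) (nhds L))
    (hC_right : Tendsto C (nhdsWithin c (Ici c)) (nhds (C c)))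
    (hτ : τ = μ₁ c - μ₀ c) :
    ∃ (β : ℝ) (f : ℝ → ℝ), Continuous f ∧
      ∀ x : ℝ, μ₀ x * (1 - p x) + μ₁ x * p x + C x
        = τ * p x + β * (if c ≤ x then 1 else 0) + f x := by
  obtain ⟨Lp, hLp⟩ := hp_left
  obtain ⟨LC, hLC⟩ := hC_left
  set h : ℝ → ℝ := fun x => (μ₁ x - μ₀ x - τ) * p x + C x with hh
  have hfac : Continuous (fun x => μ₁ x - μ₀ x - τ) := by continuity
  have hfac0 : μ₁ c - μ₀ c - τ = 0 := by rw [hτ]; ring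
  set β : ℝ := C c - LC with hβ
  refine ⟨β, fun x => μ₀ x + (h x - β * (if c ≤ x then 1 else 0)), ?_, ?_⟩
  · apply hμ₀.add
    have hcont : Continuous (fun x => h x - β * (if c ≤ x then 1 else 0)) := by
      rw [continuous_iff_continuousAt]
      intro x
      rcases lt_trichotomy x c with hx | rfl | hx
      · -- x < c : eventually value = h
        have hh_cont : ContinuousAt h x := by
          exact ((hfac.continuousAt).mul (hp_cont x hx.ne)).add (hC_cont x hx.ne)
        have : ∀ᶠ y in nhds x, h y - β * (if c ≤ y then 1 else 0) = h y := by
          filter_upwards [Iio_mem_nhds hx] with y hy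
          rw [if_neg (not_le.mpr (mem_Iio.mp hy))]; ring
        exact ContinuousAt.congr (by simpa [not_le.mpr hx] using hh_cont) (this.mono fun y hy => hy.symm)
      · -- x = c
        unfold ContinuousAt
        have hval : h x - β * (if x ≤ x then 1 else 0) = LC := by
          simp only [hh, hfac0, hβ, le_refl, if_pos]
          ring
        rw [show ((fun y => h y - β * if x ≤ y then 1 else 0) x) = LC from hval,
          ← nhdsLT_sup_nhdsGE x, tendsto_sup]
        constructor
        · have hle : ∀ᶠ y in nhdsWithin x (Iio x),
              h y - β * (if x ≤ y then 1 else 0) = h y := by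
            filter_upwards [self_mem_nhdsWithin] with y hy
            rw [if_neg (not_le.mpr (mem_Iio.mp hy))]; ring
          have hth : Tendsto h (nhdsWithin x (Iio x)) (nhds LC) := by
            have h1 : Tendsto (fun y => (μ₁ y - μ₀ y - τ) * p y)
                (nhdsWithin x (Iio x)) (nhds 0) := by
              have := (hfac.continuousAt (x := x)).continuousWithinAt.tendsto.mul hLp
              simpa [hfac0] using this
            have := h1.add hLC
            simpa using this
          exact hth.congr' (hle.mono fun y hy => hy.symm)
        · have hle : ∀ᶠ y in nhdsWithin x (Ici x),
              h y - β * (if x ≤ y then 1 else 0) = h y - β := by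
            filter_upwards [self_mem_nhdsWithin] with y hy
            rw [if_pos (mem_Ici.mp hy)]; ring
          have hth : Tendsto h (nhdsWithin x (Ici x)) (nhds (C x)) := by
            have h1 : Tendsto (fun y => (μ₁ y - μ₀ y - τ) * p y)
                (nhdsWithin x (Ici x)) (nhds 0) := by
              have := (hfac.continuousAt (x := x)).continuousWithinAt.tendsto.mul hp_right
              simpa [hfac0] using this
            have := h1.add hC_right
            simpa using this
          have : Tendsto (fun y => h y - β) (nhdsWithin x (Ici x)) (nhds (C x - β)) :=
            hth.sub_const β
          have h2 : C x - β = LC := by rw [hβ]; ring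
          rw [h2] at this
          exact this.congr' (hle.mono fun y hy => hy.symm)
      · -- x > c
        have hh_cont : ContinuousAt h x := by
          exact ((hfac.continuousAt).mul (hp_cont x hx.ne')).add (hC_cont x hx.ne')
        have : ∀ᶠ y in nhds x, h y - β * (if c ≤ y then 1 else 0) = h y - β := by
          filter_upwards [Ioi_mem_nhds hx] with y hy
          simp [le_of_lt (mem_Ioi.mp hy)]
        exact ContinuousAt.congr (show ContinuousAt (fun y => h y - β) x from hh_cont.sub continuousAt_const) (this.mono fun y hy => hy.symm)
    exact hcont
  · intro x
    simp only [hh]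
    ring
end

section
/- Let V, V₀ ∈ ℝ^{n×n} be symmetric positive definite, X ∈ ℝ^{n×p} of full column rank p, and g ∈ ℝⁿ with U = (g, X) ∈ ℝ^{n×(p+1)} of full column rank. Define H = X(XᵀV⁻¹X)⁻¹XᵀV⁻¹, S = V⁻¹(I − H), Ω = V⁻¹V₀V⁻¹, and R = Ω − ΩH − HᵀΩ + HᵀΩH. Then e₁ᵀ(UᵀV⁻¹U)⁻¹(UᵀV⁻¹V₀V⁻¹U)(UᵀV⁻¹U)⁻¹e₁ = (gᵀRg)/(gᵀSg)², where e₁ is the first standard basis vector of ℝ^{p+1}. -/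
open Matrix

private lemma inj_of_rank' {m k : ℕ} (A : Matrix (Fin m) (Fin k) ℝ) (h : A.rank = k) :
    Function.Injective A.mulVec := by
  have h1 := LinearMap.finrank_range_add_finrank_ker A.mulVecLin
  have h' : Module.finrank ℝ (LinearMap.range A.mulVecLin) = k := h
  have h2 : Module.finrank ℝ (Fin k → ℝ) = k := by simp
  have hker : Module.finrank ℝ (LinearMap.ker A.mulVecLin) = 0 := by omega
  have hbot : LinearMap.ker A.mulVecLin = ⊥ := Submodule.finrank_eq_zero.mp hker
  have hinj := LinearMap.ker_eq_bot.mp hbot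
  intro x y hxy
  exact hinj (by simpa [Matrix.mulVecLin_apply] using hxy)

private lemma posdef_conj' {m k : ℕ} (P : Matrix (Fin m) (Fin m) ℝ) (hP : P.PosDef)
    (W : Matrix (Fin m) (Fin k) ℝ) (hW : Function.Injective W.mulVec) :
    (Wᵀ * P * W).PosDef := by
  have hPt : Pᵀ = P := by
    rw [← conjTranspose_eq_transpose_of_trivial]; exact hP.1.eq
  refine Matrix.PosDef.of_dotProduct_mulVec_pos ?_ ?_
  · show (Wᵀ * P * W)ᴴ = Wᵀ * P * W
    rw [conjTranspose_eq_transpose_of_trivial, transpose_mul, transpose_mul,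
      transpose_transpose, hPt, Matrix.mul_assoc]
  · intro x hx
    have hWx : W.mulVec x ≠ 0 := fun h0 => hx (hW (by simpa using h0))
    have := hP.dotProduct_mulVec_pos hWx
    rw [star_trivial] at this
    rw [star_trivial, ← Matrix.mulVec_mulVec, ← Matrix.mulVec_mulVec,
      Matrix.dotProduct_mulVec, Matrix.vecMul_transpose]
    exact this

theorem stmt13 (n p : ℕ) (V V₀ : Matrix (Fin n) (Fin n) ℝ)
    (hV : V.PosDef) (hV₀ : V₀.PosDef)
    (X : Matrix (Fin n) (Fin p) ℝ) (hX : X.rank = p) (g : Fin n → ℝ)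
    (U : Matrix (Fin n) (Fin (p + 1)) ℝ)
    (hUdef : U = Matrix.of fun i => Fin.cons (g i) (X i))
    (hU : U.rank = p + 1)
    (H S Om R : Matrix (Fin n) (Fin n) ℝ)
    (hH : H = X * (Xᵀ * V⁻¹ * X)⁻¹ * Xᵀ * V⁻¹)
    (hS : S = V⁻¹ * (1 - H))
    (hOm : Om = V⁻¹ * V₀ * V⁻¹)
    (hR : R = Om - Om * H - Hᵀ * Om + Hᵀ * Om * H) :
    ((Uᵀ * V⁻¹ * U)⁻¹ * (Uᵀ * V⁻¹ * V₀ * V⁻¹ * U) * (Uᵀ * V⁻¹ * U)⁻¹) 0 0 =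
      (g ⬝ᵥ R.mulVec g) / (g ⬝ᵥ S.mulVec g) ^ 2 := by
  have hViPD : V⁻¹.PosDef := hV.inv
  have injX : Function.Injective X.mulVec := inj_of_rank' X hX
  have injU : Function.Injective U.mulVec := inj_of_rank' U hU
  set M := Xᵀ * V⁻¹ * X with hMdef
  have hMPD : M.PosDef := posdef_conj' V⁻¹ hViPD X injX
  set A := Uᵀ * V⁻¹ * U with hAdef
  have hAPD : A.PosDef := posdef_conj' V⁻¹ hViPD U injU
  have hAdet : IsUnit A.det := hAPD.det_pos.ne'.isUnit
  have hMdet : IsUnit M.det := hMPD.det_pos.ne'.isUnit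
  -- Xᵀ * S = 0
  have hXH : Xᵀ * V⁻¹ * H = Xᵀ * V⁻¹ := by
    rw [hH, show Xᵀ * V⁻¹ * (X * M⁻¹ * Xᵀ * V⁻¹) = M * M⁻¹ * (Xᵀ * V⁻¹) by
      rw [hMdef]; simp only [Matrix.mul_assoc],
      Matrix.mul_nonsing_inv _ hMdet, Matrix.one_mul]
  have hXS : Xᵀ * S = 0 := by
    rw [hS, ← Matrix.mul_assoc, Matrix.mul_sub, Matrix.mul_one, hXH, sub_self]
  -- the vector w
  set v : Fin p → ℝ := -(M⁻¹ * (Xᵀ * V⁻¹)).mulVec g with hv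
  set w : Fin (p + 1) → ℝ := Fin.cons 1 v with hw
  have hXv : X.mulVec v = -(H.mulVec g) := by
    rw [hv, Matrix.mulVec_neg, Matrix.mulVec_mulVec, hH]
    simp only [Matrix.mul_assoc]
  have hUw1 : U.mulVec w = g + X.mulVec v := by
    funext j
    simp [Matrix.mulVec, dotProduct, Fin.sum_univ_succ, hUdef, hw]
  have hUw : U.mulVec w = (1 - H).mulVec g := by
    rw [hUw1, hXv, Matrix.sub_mulVec, Matrix.one_mulVec, sub_eq_add_neg]
  -- A *ᵥ w = single 0 s
  have hAw : A.mulVec w = Pi.single 0 (g ⬝ᵥ S.mulVec g) := by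
    have h1 : A.mulVec w = (Uᵀ * S).mulVec g := by
      rw [hAdef, ← Matrix.mulVec_mulVec, hUw, Matrix.mulVec_mulVec, hS, Matrix.mul_assoc]
    rw [h1]
    funext j
    refine Fin.cases ?_ ?_ j
    · rw [← Matrix.mulVec_mulVec]
      simp [Matrix.mulVec, dotProduct, hUdef]
    · intro k
      have h0 : ((Xᵀ * S) *ᵥ g) k = 0 := by
        rw [hXS, Matrix.zero_mulVec]; rfl
      have h2 : ((Uᵀ * S) *ᵥ g) k.succ = ((Xᵀ * S) *ᵥ g) k := by
        simp [Matrix.mulVec, dotProduct, Matrix.mul_apply, hUdef]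
      rw [h2, h0, Pi.single_eq_of_ne (Fin.succ_ne_zero k)]
  set s := g ⬝ᵥ S.mulVec g with hsdef
  have hw0 : w ≠ 0 := by
    intro h
    have := congrFun h 0
    simp [hw] at this
  have hwAw : w ⬝ᵥ A.mulVec w = s := by
    rw [hAw, dotProduct_single]
    simp [hw]
  have hs : 0 < s := by
    have := hAPD.dotProduct_mulVec_pos hw0
    rwa [star_trivial, hwAw] at this
  -- A⁻¹ *ᵥ e = s⁻¹ • w
  have hAinv : A⁻¹.mulVec (Pi.single (0 : Fin (p + 1)) (1 : ℝ)) = s⁻¹ • w := by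
    have h1 : A⁻¹.mulVec (A.mulVec w) = w := by
      rw [Matrix.mulVec_mulVec, Matrix.nonsing_inv_mul _ hAdet, Matrix.one_mulVec]
    rw [hAw] at h1
    have h2 : Pi.single (0 : Fin (p + 1)) s
        = s • (Pi.single (0 : Fin (p + 1)) (1 : ℝ) : Fin (p + 1) → ℝ) := by
      funext j
      by_cases h : j = 0 <;> simp [Pi.single_apply, h]
    rw [h2, Matrix.mulVec_smul] at h1
    rw [← h1, smul_smul, inv_mul_cancel₀ hs.ne', one_smul]
  have hAt : Aᵀ = A := by
    rw [← conjTranspose_eq_transpose_of_trivial]; exact hAPD.1.eq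
  have hAit : A⁻¹ᵀ = A⁻¹ := by rw [Matrix.transpose_nonsing_inv, hAt]
  have hB : Uᵀ * V⁻¹ * V₀ * V⁻¹ * U = Uᵀ * Om * U := by
    rw [hOm]; simp only [Matrix.mul_assoc]
  -- w ⬝ᵥ (Uᵀ * Om * U) *ᵥ w = g ⬝ᵥ R *ᵥ g
  have hRfact : R = (1 - H)ᵀ * Om * (1 - H) := by
    rw [hR, transpose_sub, transpose_one]
    noncomm_ring
  have hgRg : g ⬝ᵥ R.mulVec g = ((1 - H).mulVec g) ⬝ᵥ Om.mulVec ((1 - H).mulVec g) := by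
    rw [hRfact, ← Matrix.mulVec_mulVec, ← Matrix.mulVec_mulVec,
      Matrix.dotProduct_mulVec, Matrix.vecMul_transpose]
  have hwBw : w ⬝ᵥ (Uᵀ * Om * U).mulVec w = g ⬝ᵥ R.mulVec g := by
    rw [hgRg, ← Matrix.mulVec_mulVec, ← Matrix.mulVec_mulVec,
      Matrix.dotProduct_mulVec, Matrix.vecMul_transpose, hUw]
  -- finish
  have hentry : ∀ C : Matrix (Fin (p + 1)) (Fin (p + 1)) ℝ,
      C 0 0 = Pi.single (0 : Fin (p + 1)) (1 : ℝ) ⬝ᵥ C.mulVec (Pi.single 0 1) := by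
    intro C
    simp [single_dotProduct, Matrix.mulVec_single]
  rw [hentry (A⁻¹ * (Uᵀ * V⁻¹ * V₀ * V⁻¹ * U) * A⁻¹), hB, ← Matrix.mulVec_mulVec, ← Matrix.mulVec_mulVec, hAinv,
    Matrix.dotProduct_mulVec, ← hAit, Matrix.vecMul_transpose, hAinv,
    smul_dotProduct, Matrix.mulVec_smul, dotProduct_smul, hwBw]
  rw [smul_eq_mul, smul_eq_mul, eq_div_iff (pow_ne_zero 2 hs.ne')]
  field_simp
end
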